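/- For all reals a, b and every x ∈ ℤ: (i) for 1 ≤ k ≤ N and 1 ≤ l ≤ N−1, the series ∑_{y ≥ x} v_{N+1−l}^{y−x} F_{k,l}(y,a,b) converges absolutely and its sum equals F_{k,l+1}(x,a,b); (ii) for 2 ≤ k ≤ N and 1 ≤ l ≤ N, the series ∑_{y ≥ x} v_{N+2−k}^{y−x} F_{k,l}(y,a,b) converges absolutely and its sum equals F_{k−1,l}(x,a,b). -/

import Mathlib

open Complex MeasureTheory
open scoped Real

/-- `F N v k l x a b r` is the contour integral
`(1/(2πi)) ∮_{|z|=r} z^{x−1} e^{bz + a/z}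
  (∏_{i=1}^{k−1} (1 − v_{N+1−i} z)) / (∏_{j=1}^{l−1} (1 − v_{N+1−j} z)) dz`. -/
noncomputable def F (N : ℕ) (v : ℕ → ℝ) (k l : ℕ) (x : ℤ) (a b r : ℝ) : ℂ :=
  (2 * (Real.pi : ℂ) * Complex.I)⁻¹ *
    ∮ z in C(0, r), z ^ (x - 1) * Complex.exp ((b : ℂ) * z + (a : ℂ) / z) *
      (∏ i ∈ Finset.range (k - 1), (1 - (v (N - i) : ℂ) * z)) /
      ∏ j ∈ Finset.range (l - 1), (1 - (v (N - j) : ℂ) * z)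

noncomputable def Eab (a b : ℝ) : ℂ → ℂ := fun z => Complex.exp ((b : ℂ) * z + (a : ℂ) / z)

noncomputable def Pv (N : ℕ) (v : ℕ → ℝ) (n : ℕ) : ℂ → ℂ :=
  fun z => ∏ i ∈ Finset.range n, (1 - (v (N - i) : ℂ) * z)

lemma Pv_succ (N : ℕ) (v : ℕ → ℝ) (n : ℕ) (z : ℂ) :
    Pv N v (n + 1) z = Pv N v n z * (1 - (v (N - n) : ℂ) * z) := by
  simp [Pv, Finset.prod_range_succ]

lemma Pv_continuous (N : ℕ) (v : ℕ → ℝ) (n : ℕ) : Continuous (Pv N v n) := by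
  unfold Pv
  exact continuous_finset_prod _ fun i _ =>
    continuous_const.sub (continuous_const.mul continuous_id)

lemma factor_ne_zero {w r : ℝ} (hw : 0 < w) (hwr : w * r < 1) {z : ℂ}
    (hz : z ∈ Metric.sphere (0 : ℂ) r) : (1 : ℂ) - (w : ℂ) * z ≠ 0 := by
  rw [mem_sphere_zero_iff_norm] at hz
  intro h
  have h1 : (1 : ℂ) = (w : ℂ) * z := sub_eq_zero.mp h
  have : ‖(1 : ℂ)‖ = ‖(w : ℂ) * z‖ := by rw [← h1]
  rw [norm_one, norm_mul, Complex.norm_real, hz, Real.norm_of_nonneg hw.le] at this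
  linarith [this ▸ hwr]

lemma Pv_ne_zero {N : ℕ} {v : ℕ → ℝ} (hv : ∀ i, 1 ≤ i → i ≤ N → 0 < v i)
    {r : ℝ} (hr' : ∀ j, 1 ≤ j → j ≤ N → v j * r < 1) {n : ℕ} (hn : n ≤ N) {z : ℂ}
    (hz : z ∈ Metric.sphere (0 : ℂ) r) : Pv N v n z ≠ 0 := by
  unfold Pv
  refine Finset.prod_ne_zero_iff.mpr fun i hi => ?_
  rw [Finset.mem_range] at hi
  have h1 : 1 ≤ N - i := by omega
  have h2 : N - i ≤ N := by omega
  exact factor_ne_zero (hv _ h1 h2) (hr' _ h1 h2) hz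

/-- Representation of `F` via `Eab` and `Pv`. -/
lemma Frep (N : ℕ) (v : ℕ → ℝ) (k l : ℕ) (x : ℤ) (a b r : ℝ) :
    F N v k l x a b r = (2 * (Real.pi : ℂ) * Complex.I)⁻¹ *
      ∮ z in C(0, r), z ^ (x - 1) * (Eab a b z * Pv N v (k - 1) z / Pv N v (l - 1) z) := by
  unfold F Eab Pv
  exact congrArg (fun f => (2 * (Real.pi : ℂ) * Complex.I)⁻¹ * circleIntegral f 0 r)
    (funext fun z => by ring)

/-- The key geometric–series/contour-integral interchange lemma. -/
lemma geom_key (v r : ℝ) (hv : 0 < v) (hr : 0 < r) (hvr : v * r < 1) (x : ℤ)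
    (g : ℂ → ℂ) (hg : ContinuousOn g (Metric.sphere (0 : ℂ) r)) :
    Summable (fun m : ℕ => ‖((v ^ m : ℝ) : ℂ) * ∮ z in C(0, r), z ^ (x + m - 1) * g z‖) ∧
    (∑' m : ℕ, ((v ^ m : ℝ) : ℂ) * ∮ z in C(0, r), z ^ (x + m - 1) * g z)
      = ∮ z in C(0, r), z ^ (x - 1) * (g z / (1 - (v : ℂ) * z)) := by
  have hz0 : ∀ z ∈ Metric.sphere (0 : ℂ) r, z ≠ 0 := by
    intro z hz h0
    rw [mem_sphere_zero_iff_norm, h0, norm_zero] at hz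
    exact hr.ne hz
  have hcont : ContinuousOn (fun z : ℂ => z ^ (x - 1) * g z) (Metric.sphere (0 : ℂ) r) :=
    (continuousOn_id.zpow₀ (x - 1) fun z hz => Or.inl (hz0 z hz)).mul hg
  obtain ⟨C, hC⟩ := (isCompact_sphere (0 : ℂ) r).exists_bound_of_continuousOn hcont
  have hrmem : (r : ℂ) ∈ Metric.sphere (0 : ℂ) r := by
    rw [mem_sphere_zero_iff_norm, Complex.norm_real, Real.norm_of_nonneg hr.le]
  have hC0 : 0 ≤ C := le_trans (norm_nonneg _) (hC _ hrmem)
  have hmem : ∀ θ : ℝ, circleMap 0 r θ ∈ Metric.sphere (0 : ℂ) r :=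
    circleMap_mem_sphere 0 hr.le
  have hcne : ∀ θ : ℝ, circleMap 0 r θ ≠ 0 := fun θ => circleMap_ne_center hr.ne'
  have hnormc : ∀ θ : ℝ, ‖circleMap 0 r θ‖ = r := by
    intro θ
    rw [norm_circleMap_zero, abs_of_pos hr]
  have hsplit : ∀ (m : ℕ) (z : ℂ), z ≠ 0 → z ^ (x + m - 1) = z ^ (x - 1) * z ^ m := by
    intro m z hz
    rw [← zpow_natCast z m, ← zpow_add₀ hz]
    congr 1
    ring
  have hbound : ∀ (m : ℕ) (z : ℂ), z ∈ Metric.sphere (0 : ℂ) r →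
      ‖z ^ (x + m - 1) * g z‖ ≤ C * r ^ m := by
    intro m z hz
    rw [hsplit m z (hz0 z hz)]
    have h1 : z ^ (x - 1) * z ^ m * g z = z ^ m * (z ^ (x - 1) * g z) := by ring
    rw [h1, norm_mul, norm_pow, mem_sphere_zero_iff_norm.mp hz]
    calc r ^ m * ‖z ^ (x - 1) * g z‖ ≤ r ^ m * C :=
          mul_le_mul_of_nonneg_left (hC z hz) (by positivity)
      _ = C * r ^ m := by ring
  have hgeo : Summable (fun m : ℕ => 2 * π * r * C * (v * r) ^ m) :=
    (summable_geometric_of_lt_one (by positivity) hvr).mul_left _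
  have hgeo' : Summable (fun m : ℕ => r * C * (v * r) ^ m) :=
    (summable_geometric_of_lt_one (by positivity) hvr).mul_left _
  constructor
  · refine Summable.of_nonneg_of_le (fun m => norm_nonneg _) (fun m => ?_) hgeo
    rw [norm_mul, Complex.norm_real, Real.norm_of_nonneg (by positivity)]
    have h2 := circleIntegral.norm_integral_le_of_norm_le_const hr.le (hbound m)
    calc v ^ m * ‖∮ z in C(0, r), z ^ (x + m - 1) * g z‖
        ≤ v ^ m * (2 * π * r * (C * r ^ m)) :=
          mul_le_mul_of_nonneg_left h2 (by positivity)
      _ = 2 * π * r * C * (v * r) ^ m := by rw [mul_pow]; ring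
  · simp only [circleIntegral, deriv_circleMap, smul_eq_mul]
    simp_rw [← intervalIntegral.integral_const_mul]
    refine HasSum.tsum_eq ?_
    refine intervalIntegral.hasSum_integral_of_dominated_convergence
      (fun m _ => r * C * (v * r) ^ m) (fun m => ?_) (fun m => ?_) ?_ ?_ ?_
    · refine Continuous.aestronglyMeasurable ?_
      have cg : Continuous fun θ : ℝ => g (circleMap 0 r θ) :=
        hg.comp_continuous (continuous_circleMap 0 r) hmem
      have cz : Continuous fun θ : ℝ => circleMap 0 r θ ^ (x + m - 1) :=
        (continuous_circleMap 0 r).zpow₀ _ fun θ => Or.inl (hcne θ)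
      exact continuous_const.mul
        (((continuous_circleMap 0 r).mul continuous_const).mul (cz.mul cg))
    · refine Filter.Eventually.of_forall fun θ _ => ?_
      rw [norm_mul, norm_mul, norm_mul, Complex.norm_I, mul_one, hnormc θ,
        Complex.norm_real, Real.norm_of_nonneg (by positivity : (0:ℝ) ≤ v ^ m)]
      calc v ^ m * (r * ‖circleMap 0 r θ ^ (x + m - 1) * g (circleMap 0 r θ)‖)
          ≤ v ^ m * (r * (C * r ^ m)) := by
            refine mul_le_mul_of_nonneg_left ?_ (by positivity)
            exact mul_le_mul_of_nonneg_left (hbound m _ (hmem θ)) hr.le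
        _ = r * C * (v * r) ^ m := by rw [mul_pow]; ring
    · exact Filter.Eventually.of_forall fun θ _ => hgeo'
    · exact intervalIntegrable_const
    · refine Filter.Eventually.of_forall fun θ _ => ?_
      have hw : ‖(v : ℂ) * circleMap 0 r θ‖ < 1 := by
        rw [norm_mul, Complex.norm_real, Real.norm_of_nonneg hv.le, hnormc θ]
        exact hvr
      have hgs := (hasSum_geometric_of_norm_lt_one hw).mul_left
        (circleMap 0 r θ * Complex.I *
          (circleMap 0 r θ ^ (x - 1) * g (circleMap 0 r θ)))
      have hfun : (fun m : ℕ => ((v ^ m : ℝ) : ℂ) * (circleMap 0 r θ * Complex.I *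
          (circleMap 0 r θ ^ (x + m - 1) * g (circleMap 0 r θ))))
          = fun m : ℕ => circleMap 0 r θ * Complex.I *
            (circleMap 0 r θ ^ (x - 1) * g (circleMap 0 r θ)) *
            ((v : ℂ) * circleMap 0 r θ) ^ m := by
        funext m
        rw [hsplit m _ (hcne θ), Complex.ofReal_pow, mul_pow]
        ring
      have hval : circleMap 0 r θ * Complex.I * (circleMap 0 r θ ^ (x - 1) *
          (g (circleMap 0 r θ) / (1 - (v : ℂ) * circleMap 0 r θ)))
          = circleMap 0 r θ * Complex.I *
            (circleMap 0 r θ ^ (x - 1) * g (circleMap 0 r θ)) *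
            (1 - (v : ℂ) * circleMap 0 r θ)⁻¹ := by
        rw [div_eq_mul_inv]; ring
      rw [hfun, hval]
      exact hgs

/-- `geom_key` with the `(2πi)⁻¹` prefactor. -/
lemma geom_key' (v r : ℝ) (hv : 0 < v) (hr : 0 < r) (hvr : v * r < 1) (x : ℤ)
    (g : ℂ → ℂ) (hg : ContinuousOn g (Metric.sphere (0 : ℂ) r)) :
    Summable (fun m : ℕ => ‖((v ^ m : ℝ) : ℂ) * ((2 * (Real.pi : ℂ) * Complex.I)⁻¹ *
        ∮ z in C(0, r), z ^ (x + m - 1) * g z)‖) ∧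
    ∑' m : ℕ, ((v ^ m : ℝ) : ℂ) * ((2 * (Real.pi : ℂ) * Complex.I)⁻¹ *
        ∮ z in C(0, r), z ^ (x + m - 1) * g z)
      = (2 * (Real.pi : ℂ) * Complex.I)⁻¹ *
        ∮ z in C(0, r), z ^ (x - 1) * (g z / (1 - (v : ℂ) * z)) := by
  obtain ⟨h1, h2⟩ := geom_key v r hv hr hvr x g hg
  constructor
  · refine (h1.mul_left ‖(2 * (Real.pi : ℂ) * Complex.I)⁻¹‖).congr fun m => ?_
    rw [norm_mul, norm_mul, norm_mul]
    ring
  · calc ∑' m : ℕ, ((v ^ m : ℝ) : ℂ) * ((2 * (Real.pi : ℂ) * Complex.I)⁻¹ *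
          ∮ z in C(0, r), z ^ (x + m - 1) * g z)
        = ∑' m : ℕ, (2 * (Real.pi : ℂ) * Complex.I)⁻¹ * (((v ^ m : ℝ) : ℂ) *
          ∮ z in C(0, r), z ^ (x + m - 1) * g z) := by
          refine tsum_congr fun m => ?_
          ring
      _ = (2 * (Real.pi : ℂ) * Complex.I)⁻¹ * ∑' m : ℕ, (((v ^ m : ℝ) : ℂ) *
          ∮ z in C(0, r), z ^ (x + m - 1) * g z) := tsum_mul_left
      _ = _ := by rw [h2]

theorem stmt5 (N : ℕ) (hN : 1 ≤ N) (v : ℕ → ℝ)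
    (hv : ∀ i, 1 ≤ i → i ≤ N → 0 < v i)
    (r : ℝ) (hr : 0 < r) (hr' : ∀ j, 1 ≤ j → j ≤ N → r < 1 / v j)
    (a b : ℝ) (x : ℤ) :
    (∀ k l, 1 ≤ k → k ≤ N → 1 ≤ l → l ≤ N - 1 →
      Summable (fun m : ℕ => ‖((v (N + 1 - l) ^ m : ℝ) : ℂ) * F N v k l (x + m) a b r‖) ∧
      ∑' m : ℕ, ((v (N + 1 - l) ^ m : ℝ) : ℂ) * F N v k l (x + m) a b r
        = F N v k (l + 1) x a b r) ∧
    (∀ k l, 2 ≤ k → k ≤ N → 1 ≤ l → l ≤ N →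
      Summable (fun m : ℕ => ‖((v (N + 2 - k) ^ m : ℝ) : ℂ) * F N v k l (x + m) a b r‖) ∧
      ∑' m : ℕ, ((v (N + 2 - k) ^ m : ℝ) : ℂ) * F N v k l (x + m) a b r
        = F N v (k - 1) l x a b r) := by
  have hvr : ∀ j, 1 ≤ j → j ≤ N → v j * r < 1 := by
    intro j h1 h2
    have := hr' j h1 h2
    rw [lt_div_iff₀ (hv j h1 h2)] at this
    linarith
  have hz0 : ∀ z ∈ Metric.sphere (0 : ℂ) r, z ≠ 0 := by
    intro z hz h0
    rw [mem_sphere_zero_iff_norm, h0, norm_zero] at hz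
    exact hr.ne hz
  have hEcont : ContinuousOn (Eab a b) (Metric.sphere (0 : ℂ) r) := by
    unfold Eab
    exact Complex.continuous_exp.comp_continuousOn
      ((continuousOn_const.mul continuousOn_id).add (continuousOn_const.div continuousOn_id hz0))
  constructor
  · -- part (i)
    intro k l hk1 hk2 hl1 hl2
    obtain ⟨n, rfl⟩ : ∃ n, l = n + 1 := ⟨l - 1, by omega⟩
    have hidx : N + 1 - (n + 1) = N - n := by omega
    have h1 : 1 ≤ N - n := by omega
    have h2 : N - n ≤ N := by omega
    have hgcont : ContinuousOn (fun z => Eab a b z * Pv N v (k - 1) z / Pv N v n z)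
        (Metric.sphere (0 : ℂ) r) := by
      refine ContinuousOn.div (hEcont.mul (Pv_continuous N v (k - 1)).continuousOn)
        (Pv_continuous N v n).continuousOn ?_
      intro z hz
      exact Pv_ne_zero hv hvr (by omega) hz
    obtain ⟨hs, ht⟩ := geom_key' (v (N - n)) r (hv _ h1 h2) hr (hvr _ h1 h2) x
      (fun z => Eab a b z * Pv N v (k - 1) z / Pv N v n z) hgcont
    rw [hidx]
    simp_rw [Frep]
    refine ⟨hs, ht.trans ?_⟩
    refine congrArg (fun f => (2 * (Real.pi : ℂ) * Complex.I)⁻¹ * circleIntegral f 0 r)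
      (funext fun z => ?_)
    show z ^ (x - 1) * (Eab a b z * Pv N v (k - 1) z / Pv N v n z / (1 - (v (N - n) : ℂ) * z))
      = z ^ (x - 1) * (Eab a b z * Pv N v (k - 1) z / Pv N v (n + 1 + 1 - 1) z)
    rw [show n + 1 + 1 - 1 = n + 1 from rfl, Pv_succ, div_div]
  · -- part (ii)
    intro k l hk1 hk2 hl1 hl2
    obtain ⟨j, rfl⟩ : ∃ j, k = j + 2 := ⟨k - 2, by omega⟩
    have hidx : N + 2 - (j + 2) = N - j := by omega
    have h1 : 1 ≤ N - j := by omega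
    have h2 : N - j ≤ N := by omega
    have hgcont : ContinuousOn (fun z => Eab a b z * Pv N v (j + 2 - 1) z / Pv N v (l - 1) z)
        (Metric.sphere (0 : ℂ) r) := by
      refine ContinuousOn.div (hEcont.mul (Pv_continuous N v (j + 2 - 1)).continuousOn)
        (Pv_continuous N v (l - 1)).continuousOn ?_
      intro z hz
      exact Pv_ne_zero hv hvr (by omega) hz
    obtain ⟨hs, ht⟩ := geom_key' (v (N - j)) r (hv _ h1 h2) hr (hvr _ h1 h2) x
      (fun z => Eab a b z * Pv N v (j + 2 - 1) z / Pv N v (l - 1) z) hgcont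
    rw [hidx]
    simp_rw [Frep]
    refine ⟨hs, ht.trans ?_⟩
    refine congrArg (fun I => (2 * (Real.pi : ℂ) * Complex.I)⁻¹ * I)
      (circleIntegral.integral_congr hr.le fun z hz => ?_)
    show z ^ (x - 1) * (Eab a b z * Pv N v (j + 2 - 1) z / Pv N v (l - 1) z /
        (1 - (v (N - j) : ℂ) * z))
      = z ^ (x - 1) * (Eab a b z * Pv N v (j + 2 - 1 - 1) z / Pv N v (l - 1) z)
    have hW : (1 : ℂ) - (v (N - j) : ℂ) * z ≠ 0 :=
      factor_ne_zero (hv _ h1 h2) (hvr _ h1 h2) hz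
    have hQ : Pv N v (l - 1) z ≠ 0 := Pv_ne_zero hv hvr (by omega) hz
    rw [show j + 2 - 1 = j + 1 from rfl, show j + 1 - 1 = j from rfl, Pv_succ]
    field_simp
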